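/- Let C be a nonempty convex subset of a real Banach space X with 0 ∈ C, and let [C] denote the closed linear span of C in X. Then a point x ∈ C is a non-proper support point of C in X if and only if x is a nonsupport point of C regarded as a subset of the Banach space [C]; that is, C_{NP} = C_{N,[C]}. -/

import Mathlib

/-- For a nonempty convex set `C` with `0 ∈ C` in a real Banach space `X`, a point
`x ∈ C` is a non-proper support point of `C` (in `X`) iff it is a nonsupport point of
`C` regarded as a subset of the closed linear span `[C]` of `C`. -/
theorem stmt_2 {X : Type*} [NormedAddCommGroup X] [NormedSpace ℝ X] [CompleteSpace X]
    (C : Set X) (hconv : Convex ℝ C) (h0 : (0 : X) ∈ C)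
    (x : X) (hx : x ∈ C) :
    (¬ ∃ f : X →L[ℝ] ℝ, (∀ y ∈ C, f y ≤ f x) ∧ ∃ y ∈ C, f y < f x) ↔
      ¬ ∃ g : (Submodule.span ℝ C).topologicalClosure →L[ℝ] ℝ, g ≠ 0 ∧
        ∀ y, ∀ hy : y ∈ C,
          g ⟨y, (Submodule.span ℝ C).le_topologicalClosure (Submodule.subset_span hy)⟩ ≤
            g ⟨x, (Submodule.span ℝ C).le_topologicalClosure (Submodule.subset_span hx)⟩ := by
  set S := (Submodule.span ℝ C).topologicalClosure with hS
  rw [not_iff_not]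
  constructor
  · rintro ⟨f, hle, y, hyC, hlt⟩
    refine ⟨f.comp S.subtypeL, ?_, ?_⟩
    · intro h
      have h1 : f.comp S.subtypeL
          ⟨y, (Submodule.span ℝ C).le_topologicalClosure (Submodule.subset_span hyC)⟩ = 0 := by
        rw [h]; rfl
      have h2 : f.comp S.subtypeL
          ⟨x, (Submodule.span ℝ C).le_topologicalClosure (Submodule.subset_span hx)⟩ = 0 := by
        rw [h]; rfl
      simp only [ContinuousLinearMap.comp_apply, Submodule.subtypeL_apply] at h1 h2
      exact absurd hlt (by simp [h1, h2])
    · intro z hz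
      exact hle z hz
  · rintro ⟨g, hg0, hgle⟩
    obtain ⟨h, hhext, -⟩ := exists_extension_norm_eq S g
    have hagree : ∀ z, ∀ hz : z ∈ C, h z =
        g ⟨z, (Submodule.span ℝ C).le_topologicalClosure (Submodule.subset_span hz)⟩ :=
      by
        intro z hz
        have := hhext ⟨z, (Submodule.span ℝ C).le_topologicalClosure (Submodule.subset_span hz)⟩
        simpa using this
    have hle : ∀ y ∈ C, h y ≤ h x := by
      intro y hy
      rw [hagree y hy, hagree x hx]
      exact hgle y hy
    refine ⟨h, hle, ?_⟩
    by_contra hno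
    push_neg at hno
    have heq : ∀ y ∈ C, h y = h x := fun y hy => le_antisymm (hle y hy) (hno y hy)
    have hx0 : h x = 0 := by
      have := heq 0 h0
      simpa using this.symm
    have hzero : ∀ y ∈ C, h y = 0 := fun y hy => (heq y hy).trans hx0
    have hker : S ≤ LinearMap.ker ((h : X →L[ℝ] ℝ) : X →ₗ[ℝ] ℝ) := by
      rw [hS]
      refine Submodule.topologicalClosure_minimal _ ?_ ?_
      · rw [Submodule.span_le]
        intro y hy
        exact hzero y hy
      · exact ContinuousLinearMap.isClosed_ker h
    apply hg0
    ext z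
    have : h z = g z := hhext z
    have hz0 : h (z : X) = 0 := hker z.2
    simp [← this, hz0]
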